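/- Let G be a stratified ground program with an EDB/IDB partition, and let Q be an IDB query atom that is finitely recursive on G. Then G bravely entails Q if and only if Magic(Q,G) bravely entails (the left copy of) Q, and G cautiously entails Q if and only if Magic(Q,G) cautiously entails (the left copy of) Q. -/

import Mathlib

/-- A ground ASP rule over a type `A` of ground atoms: a finite nonempty head,
a finite positive body and a finite negative body. -/
structure GroundRule (A : Type) : Type where
  head : Set A
  pos : Set A
  neg : Set A
  head_fin : head.Finite
  pos_fin : pos.Finite
  neg_fin : neg.Finite
  head_ne : head.Nonempty

/-- An interpretation `I` satisfies a ground rule. -/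
def GroundRule.satisfiedBy {A : Type} (I : Set A) (r : GroundRule A) : Prop :=
  r.pos ⊆ I ∧ r.neg ∩ I = ∅ → (r.head ∩ I).Nonempty

/-- `I` is a model of the ground program `G`. -/
def isModel {A : Type} (I : Set A) (G : Set (GroundRule A)) : Prop :=
  ∀ r ∈ G, r.satisfiedBy I

/-- The rule obtained by deleting the negative body. -/
def GroundRule.reduce {A : Type} (r : GroundRule A) : GroundRule A :=
  ⟨r.head, r.pos, ∅, r.head_fin, r.pos_fin, Set.finite_empty, r.head_ne⟩

/-- The reduct `G^I`. -/
def reduct {A : Type} (G : Set (GroundRule A)) (I : Set A) : Set (GroundRule A) :=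
  {g | ∃ r ∈ G, r.neg ∩ I = ∅ ∧ g = r.reduce}

/-- `M` is a stable model of `G`: a ⊆-minimal model of the reduct `G^M`. -/
def isStableModel {A : Type} (G : Set (GroundRule A)) (M : Set A) : Prop :=
  isModel M (reduct G M) ∧ ∀ N ⊆ M, isModel N (reduct G M) → N = M

/-- Brave entailment: `Q` is in some stable model. -/
def braveEnt {A : Type} (G : Set (GroundRule A)) (Q : A) : Prop :=
  ∃ M, isStableModel G M ∧ Q ∈ M

/-- Cautious entailment: `Q` is in every stable model. -/
def cautiousEnt {A : Type} (G : Set (GroundRule A)) (Q : A) : Prop :=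
  ∀ M, isStableModel G M → Q ∈ M

/-- `X` is an unfounded set for `G` w.r.t. `I`. -/
def isUnfounded {A : Type} (G : Set (GroundRule A)) (I X : Set A) : Prop :=
  ∀ r ∈ G, (r.head ∩ X).Nonempty →
    ¬ r.pos ⊆ I ∨ (r.neg ∩ I).Nonempty ∨ (r.pos ∩ X).Nonempty ∨
      (r.head ∩ (I \ X)).Nonempty

/-- `G` is stratified: it admits a level mapping. -/
def isStratified {A : Type} (G : Set (GroundRule A)) : Prop :=
  ∃ lv : A → ℕ, ∀ r ∈ G, ∀ h ∈ r.head,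
    (∀ b ∈ r.pos, lv b ≤ lv h) ∧ (∀ b ∈ r.neg, lv b < lv h)

/-- The set `R(Q,G)` of atoms relevant for `Q` in `G` (the least set containing `Q`
and closed under rules whose head intersects it). -/
def relevantFor {A : Type} (G : Set (GroundRule A)) (Q : A) : Set A :=
  ⋂₀ {R : Set A | Q ∈ R ∧ ∀ r ∈ G, (r.head ∩ R).Nonempty → r.head ∪ r.pos ∪ r.neg ⊆ R}

/-- `Q` is finitely recursive on `G`. -/
def finitelyRecursive {A : Type} (G : Set (GroundRule A)) (Q : A) : Prop :=
  (relevantFor G Q).Finite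

/-- A fact: a singleton head and empty bodies. -/
def GroundRule.isFact {A : Type} (r : GroundRule A) : Prop :=
  (∃ a, r.head = {a}) ∧ r.pos = ∅ ∧ r.neg = ∅

/-- The fact with head `{a}`. -/
def factRule {A : Type} (a : A) : GroundRule A :=
  ⟨{a}, ∅, ∅, Set.finite_singleton a, Set.finite_empty, Set.finite_empty,
    Set.singleton_nonempty a⟩

/-- An EDB/IDB partition of a ground program: `idb` and `edb` are disjoint and
every rule of `edb` is a fact. -/
def isPartition {A : Type} (idb edb : Set (GroundRule A)) : Prop :=
  Disjoint idb edb ∧ ∀ r ∈ edb, r.isFact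

/-- `a` is an IDB atom: it occurs in the head of some IDB rule. -/
def isIDBAtom {A : Type} (idb : Set (GroundRule A)) (a : A) : Prop :=
  ∃ r ∈ idb, a ∈ r.head
/-- The magic rule `m(q) :- m(p)` (magic atoms live in the right copy of `A ⊕ A`). -/
def magicRule {A : Type} (q p : A) : GroundRule (A ⊕ A) :=
  ⟨{Sum.inr q}, {Sum.inr p}, ∅, Set.finite_singleton _, Set.finite_singleton _,
    Set.finite_empty, Set.singleton_nonempty _⟩

/-- The modified rule obtained from `r`: the head (left copies), the positive body
augmented with the magic atoms of all head atoms, and the negative body. -/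
def modifiedRule {A : Type} (r : GroundRule A) : GroundRule (A ⊕ A) :=
  ⟨Sum.inl '' r.head, Sum.inl '' r.pos ∪ Sum.inr '' r.head, Sum.inl '' r.neg,
    r.head_fin.image _, (r.pos_fin.image _).union (r.head_fin.image _),
    r.neg_fin.image _, r.head_ne.image _⟩

/-- Renaming the atoms of a rule along a function. -/
def GroundRule.map {A B : Type} (f : A → B) (r : GroundRule A) : GroundRule B :=
  ⟨f '' r.head, f '' r.pos, f '' r.neg, r.head_fin.image _, r.pos_fin.image _,
    r.neg_fin.image _, r.head_ne.image _⟩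

/-- The magic subprogram: the seed fact `m(Q).` together with all magic rules. -/
def magicSub {A : Type} (idb : Set (GroundRule A)) (Q : A) : Set (GroundRule (A ⊕ A)) :=
  {factRule (Sum.inr Q)} ∪
    {g | ∃ r ∈ idb, ∃ p ∈ r.head, ∃ q ∈ (r.head ∪ r.pos ∪ r.neg) \ {p},
      isIDBAtom idb q ∧ g = magicRule q p}

/-- The magic transform `Magic(Q,G)` of the program `G = idb ∪ edb`:
the seed fact, the magic rules, the modified rules and the EDB facts. -/
def magicProg {A : Type} (idb edb : Set (GroundRule A)) (Q : A) :
    Set (GroundRule (A ⊕ A)) :=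
  magicSub idb Q ∪ {g | ∃ r ∈ idb, g = modifiedRule r} ∪ GroundRule.map Sum.inl '' edb

/-- The least model of a program (the intersection of all its models);
for a definite program this is its least model. -/
def leastModel {A : Type} (G : Set (GroundRule A)) : Set A :=
  ⋂₀ {I | isModel I G}

/-- `M*`: the least model of the magic subprogram. -/
def Mstar {A : Type} (idb : Set (GroundRule A)) (Q : A) : Set (A ⊕ A) :=
  leastModel (magicSub idb Q)

/-- The killed atoms w.r.t. `N`: atoms (of the left copy) that are false in `N` and
are EDB atoms or whose magic atom is true in `N`. -/
def killed {A : Type} (idb : Set (GroundRule A)) (N : Set (A ⊕ A)) : Set A :=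
  {a | Sum.inl a ∉ N ∧ (¬ isIDBAtom idb a ∨ Sum.inr a ∈ N)}

/-- The magic variant of an interpretation `I`: the heads of the EDB facts,
`M*`, and the left copies of the atoms of `I` whose magic atom is in `M*`. -/
def magicVariant {A : Type} (idb edb : Set (GroundRule A)) (Q : A) (I : Set A) :
    Set (A ⊕ A) :=
  (⋃ r ∈ edb, Sum.inl '' r.head) ∪ Mstar idb Q ∪
    {x | ∃ a ∈ I, Sum.inr a ∈ Mstar idb Q ∧ x = Sum.inl a}

namespace MagicAux

open Set

variable {A : Type}

theorem GroundRule.ext' {r s : GroundRule A} (h1 : r.head = s.head) (h2 : r.pos = s.pos)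
    (h3 : r.neg = s.neg) : r = s := by
  cases r; cases s; cases h1; cases h2; cases h3; rfl

theorem satisfiedBy_reduce_iff {I : Set A} {r : GroundRule A} :
    (GroundRule.reduce r).satisfiedBy I ↔ (r.pos ⊆ I → (r.head ∩ I).Nonempty) := by
  simp [GroundRule.satisfiedBy, GroundRule.reduce]

theorem reduce_mem_reduct {G : Set (GroundRule A)} {I : Set A} {r : GroundRule A}
    (hr : r ∈ G) (h : r.neg ∩ I = ∅) : r.reduce ∈ reduct G I :=
  ⟨r, hr, h, rfl⟩

/-- A stable model is contained in any superset of all the heads. -/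
theorem stable_subset_of_heads {P : Set (GroundRule A)} {U M : Set A}
    (hH : ∀ r ∈ P, r.head ⊆ U) (hM : isStableModel P M) : M ⊆ U := by
  have h1 : M ∩ U ⊆ M := Set.inter_subset_left
  have h2 : isModel (M ∩ U) (reduct P M) := by
    rintro g ⟨r, hrP, hneg, rfl⟩
    rw [satisfiedBy_reduce_iff]
    intro hpos
    have : (r.head ∩ M).Nonempty := by
      have := hM.1 _ (reduce_mem_reduct hrP hneg)
      rw [satisfiedBy_reduce_iff] at this
      exact this (hpos.trans h1)
    obtain ⟨h, hh, hhM⟩ := this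
    exact ⟨h, hh, hhM, hH r hrP hh⟩
  have := hM.2 _ h1 h2
  intro a ha
  rw [← this] at ha
  exact ha.2

end MagicAux
namespace MagicAux

section Strat

variable {A : Type}

/-- The stratification property. -/
def StratBy (H : Set (GroundRule A)) (lv : A → ℕ) : Prop :=
  ∀ r ∈ H, ∀ h ∈ r.head, (∀ b ∈ r.pos, lv b ≤ lv h) ∧ (∀ b ∈ r.neg, lv b < lv h)

/-- Atoms of level `≥ n`. -/
def strTail (lv : A → ℕ) (n : ℕ) : Set A := {a | n ≤ lv a}

/-- Admissible level-`n` extensions of the context `C`. -/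
def admiss (H : Set (GroundRule A)) (lv : A → ℕ) (n : ℕ) (C : Set A) : Set (Set A) :=
  {X | X ⊆ {a | lv a = n} ∧ isModel (C ∪ X ∪ strTail lv (n + 1)) H}

theorem zornA {H : Set (GroundRule A)} {lv : A → ℕ} (hs : StratBy H lv) (n : ℕ) (C : Set A)
    (hC : isModel (C ∪ strTail lv n) H) :
    ∃ X, X ∈ admiss H lv n C ∧ ∀ Y ∈ admiss H lv n C, Y ⊆ X → Y = X := by
  have hfull : {a | lv a = n} ∈ admiss H lv n C := by
    refine ⟨Set.Subset.rfl, ?_⟩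
    have heq : C ∪ {a | lv a = n} ∪ strTail lv (n + 1) = C ∪ strTail lv n := by
      ext a
      simp only [Set.mem_union, Set.mem_setOf_eq, strTail]
      constructor
      · rintro ((h | h) | h)
        · exact Or.inl h
        · exact Or.inr (by omega)
        · exact Or.inr (by omega)
      · rintro (h | h)
        · exact Or.inl (Or.inl h)
        · rcases Nat.lt_or_ge n (lv a) with h' | h'
          · exact Or.inr (by omega)
          · exact Or.inl (Or.inr (by omega))
    rw [heq]; exact hC
  have hchain : ∀ c ⊆ admiss H lv n C, IsChain (· ⊆ ·) c → c.Nonempty →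
      ∃ lb ∈ admiss H lv n C, ∀ s ∈ c, lb ⊆ s := by
    intro c hcsub hchain hcne
    obtain ⟨X₀, hX₀⟩ := hcne
    refine ⟨⋂₀ c, ⟨?_, ?_⟩, fun s hs' => Set.sInter_subset_of_mem hs'⟩
    · exact (Set.sInter_subset_of_mem hX₀).trans (hcsub hX₀).1
    · -- the intersection of a chain of admissible sets is admissible
      intro r hr hsat
      obtain ⟨hpos, hneg⟩ := hsat
      by_cases hhi : (r.head ∩ strTail lv (n + 1)).Nonempty
      · obtain ⟨h, hh, hht⟩ := hhi
        exact ⟨h, hh, Or.inr hht⟩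
      -- all head atoms have level ≤ n
      have hhead_le : ∀ h ∈ r.head, lv h ≤ n := by
        intro h hh
        by_contra hcon
        exact hhi ⟨h, hh, show n + 1 ≤ lv h by omega⟩
      obtain ⟨h₀, hh₀⟩ := r.head_ne
      -- each member of the chain satisfies the rule and the rule fires there
      have hfire : ∀ X ∈ c, (r.head ∩ (C ∪ X ∪ strTail lv (n + 1))).Nonempty := by
        intro X hXc
        refine (hcsub hXc).2 r hr ⟨?_, ?_⟩
        · intro p hp
          rcases hpos hp with (h | h) | h
          · exact Or.inl (Or.inl h)
          · exact Or.inl (Or.inr (h X hXc))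
          · exact Or.inr h
        · rw [Set.eq_empty_iff_forall_notMem]
          rintro b ⟨hbneg, hbI⟩
          rcases hbI with (h | h) | h
          · exact (Set.eq_empty_iff_forall_notMem.1 hneg b) ⟨hbneg, Or.inl (Or.inl h)⟩
          · have hbn : lv b = n := (hcsub hXc).1 h
            have h1 := (hs r hr h₀ hh₀).2 b hbneg
            have h2 := hhead_le h₀ hh₀
            omega
          · exact (Set.eq_empty_iff_forall_notMem.1 hneg b) ⟨hbneg, Or.inr h⟩
      by_cases hCt : (r.head ∩ (C ∪ strTail lv (n + 1))).Nonempty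
      · obtain ⟨h, hh, hht⟩ := hCt
        rcases hht with h' | h'
        · exact ⟨h, hh, Or.inl (Or.inl h')⟩
        · exact ⟨h, hh, Or.inr h'⟩
      -- so for each X in the chain there is a head atom in X
      have hfire' : ∀ X ∈ c, ∃ h ∈ r.head, h ∈ X := by
        intro X hXc
        obtain ⟨h, hh, hht⟩ := hfire X hXc
        rcases hht with (h' | h') | h'
        · exact absurd ⟨h, hh, Or.inl h'⟩ hCt
        · exact ⟨h, hh, h'⟩
        · exact absurd ⟨h, hh, Or.inr h'⟩ hCt
      -- pigeonhole over the finite head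
      by_contra hcon
      have hnotin : ∀ h : A, ∃ X, X ∈ c ∧ (h ∈ r.head → h ∉ X) := by
        intro h
        by_cases hh : h ∈ r.head
        · by_cases hin : ∀ X ∈ c, h ∈ X
          · exact absurd ⟨h, hh, Or.inl (Or.inr (Set.mem_sInter.2 hin))⟩ hcon
          · push_neg at hin
            obtain ⟨X, hXc, hhX⟩ := hin
            exact ⟨X, hXc, fun _ => hhX⟩
        · exact ⟨X₀, hX₀, fun h' => absurd h' hh⟩
      choose f hf1 hf2 using hnotin
      obtain ⟨b, hbmem, hbmin⟩ := Set.Finite.exists_minimalFor id (f '' r.head)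
        (r.head_fin.image f) (r.head_ne.image f)
      have hbleast : ∀ b' ∈ f '' r.head, b ⊆ b' := by
        intro b' hb'
        obtain ⟨h1, hh1, rfl⟩ := hbmem
        obtain ⟨h2, hh2, rfl⟩ := hb'
        rcases eq_or_ne (f h1) (f h2) with heq | hne
        · exact heq.le
        · rcases hchain (hf1 h1) (hf1 h2) hne with h | h
          · exact h
          · exact hbmin ⟨h2, hh2, rfl⟩ h
      have hbc : b ∈ c := by
        obtain ⟨h1, hh1, rfl⟩ := hbmem
        exact hf1 h1
      obtain ⟨h1, hh1, hh1b⟩ := hfire' b hbc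
      exact hf2 h1 hh1 (hbleast (f h1) ⟨h1, hh1, rfl⟩ hh1b)
  obtain ⟨m, _, hm⟩ := zorn_superset_nonempty (admiss H lv n C) hchain _ hfull
  exact ⟨m, hm.1, fun Y hY hYm => le_antisymm hYm (hm.2 hY hYm)⟩

open Classical in
/-- Choice of a minimal admissible extension. -/
noncomputable def pick (H : Set (GroundRule A)) (lv : A → ℕ) (n : ℕ) (C : Set A) : Set A :=
  if h : ∃ X, X ∈ admiss H lv n C ∧ ∀ Y ∈ admiss H lv n C, Y ⊆ X → Y = X then h.choose else ∅

/-- The cumulative construction. -/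
noncomputable def cum (H : Set (GroundRule A)) (lv : A → ℕ) : ℕ → Set A := fun n =>
  Nat.rec ∅ (fun m C => C ∪ pick H lv m C) n

theorem cum_succ (H : Set (GroundRule A)) (lv : A → ℕ) (n : ℕ) :
    cum H lv (n + 1) = cum H lv n ∪ pick H lv n (cum H lv n) := rfl

theorem pick_subset (H : Set (GroundRule A)) (lv : A → ℕ) (n : ℕ) (C : Set A) :
    pick H lv n C ⊆ {a | lv a = n} := by
  unfold pick
  split
  · next h => exact h.choose_spec.1.1
  · exact Set.empty_subset _

theorem pick_spec {H : Set (GroundRule A)} {lv : A → ℕ} (hs : StratBy H lv) {n : ℕ} {C : Set A}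
    (hC : isModel (C ∪ strTail lv n) H) :
    pick H lv n C ∈ admiss H lv n C ∧
      ∀ Y ∈ admiss H lv n C, Y ⊆ pick H lv n C → Y = pick H lv n C := by
  have hex := zornA hs n C hC
  unfold pick
  rw [dif_pos hex]
  exact hex.choose_spec

theorem cum_model {H : Set (GroundRule A)} {lv : A → ℕ} (hs : StratBy H lv) (n : ℕ) :
    isModel (cum H lv n ∪ strTail lv n) H := by
  induction n with
  | zero =>
    intro r hr _
    obtain ⟨h, hh⟩ := r.head_ne
    exact ⟨h, hh, Or.inr (Nat.zero_le _)⟩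
  | succ n ih =>
    have hspec := (pick_spec hs ih).1.2
    rw [cum_succ]
    exact hspec

theorem cum_mono {H : Set (GroundRule A)} {lv : A → ℕ} {n m : ℕ} (h : n ≤ m) :
    cum H lv n ⊆ cum H lv m := by
  induction m with
  | zero =>
    have : n = 0 := Nat.le_zero.1 h
    subst this; exact Set.Subset.rfl
  | succ m ih =>
    rcases Nat.le_succ_iff.1 h with h' | h'
    · exact (ih h').trans Set.subset_union_left
    · subst h'; exact Set.Subset.rfl

theorem mem_cum_of {H : Set (GroundRule A)} {lv : A → ℕ} {a : A} {m n : ℕ}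
    (ha : a ∈ cum H lv m) (hlt : lv a < n) : a ∈ cum H lv n := by
  induction m with
  | zero => exact absurd ha (Set.notMem_empty a)
  | succ m ih =>
    rcases ha with ha | ha
    · exact ih ha
    · have hlva : lv a = m := pick_subset H lv m (cum H lv m) ha
      have hmn : m + 1 ≤ n := by omega
      exact cum_mono hmn (Or.inr ha)

/-- The iterated-minimal-models interpretation. -/
noncomputable def Mfin (H : Set (GroundRule A)) (lv : A → ℕ) : Set A := ⋃ n, cum H lv n

theorem mem_Mfin_of_lt {H : Set (GroundRule A)} {lv : A → ℕ} {a : A} {n : ℕ}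
    (ha : a ∈ Mfin H lv) (hlt : lv a < n) : a ∈ cum H lv n := by
  obtain ⟨_, ⟨m, rfl⟩, ha⟩ := ha
  exact mem_cum_of ha hlt

theorem cum_subset_Mfin (H : Set (GroundRule A)) (lv : A → ℕ) (n : ℕ) :
    cum H lv n ⊆ Mfin H lv := fun a ha => Set.mem_iUnion.2 ⟨n, ha⟩

theorem Mfin_model {H : Set (GroundRule A)} {lv : A → ℕ} (hs : StratBy H lv) :
    isModel (Mfin H lv) (reduct H (Mfin H lv)) := by
  rintro g ⟨r, hr, hneg, rfl⟩
  rw [satisfiedBy_reduce_iff]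
  intro hpos
  obtain ⟨hstar, hhstar, hmax⟩ := Set.Finite.exists_maximalFor lv r.head r.head_fin r.head_ne
  set n := lv hstar with hn
  have hmax' : ∀ h ∈ r.head, lv h ≤ n := by
    intro h hh
    rcases le_total (lv h) n with h' | h'
    · exact h'
    · exact (hmax hh h').ge
  have hV := cum_model hs (n + 1)
  have hfires : (r.head ∩ (cum H lv (n + 1) ∪ strTail lv (n + 1))).Nonempty := by
    refine hV r hr ⟨?_, ?_⟩
    · intro p hp
      exact Or.inl (mem_Mfin_of_lt (hpos hp) (by have := (hs r hr hstar hhstar).1 p hp; omega))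
    · rw [Set.eq_empty_iff_forall_notMem]
      rintro b ⟨hbneg, hbV⟩
      have hblt : lv b < n := (hs r hr hstar hhstar).2 b hbneg
      rcases hbV with h | h
      · exact (Set.eq_empty_iff_forall_notMem.1 hneg b)
          ⟨hbneg, cum_subset_Mfin H lv (n + 1) h⟩
      · have : n + 1 ≤ lv b := h
        omega
  obtain ⟨h, hh, hhV⟩ := hfires
  rcases hhV with h' | h'
  · exact ⟨h, hh, cum_subset_Mfin H lv (n + 1) h'⟩
  · exact absurd (hmax' h hh) (by have : n + 1 ≤ lv h := h'; omega)

theorem Mfin_minimal {H : Set (GroundRule A)} {lv : A → ℕ} (hs : StratBy H lv) {N : Set A}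
    (hNsub : N ⊆ Mfin H lv) (hNmod : isModel N (reduct H (Mfin H lv))) : N = Mfin H lv := by
  have hcum : ∀ n, cum H lv n ⊆ N := by
    intro n
    induction n with
    | zero => exact Set.empty_subset _
    | succ n ih =>
      have hspec := pick_spec hs (cum_model hs n)
      have hX' : N ∩ pick H lv n (cum H lv n) ∈ admiss H lv n (cum H lv n) := by
        refine ⟨Set.inter_subset_right.trans (pick_subset H lv n _), ?_⟩
        intro r hr hsat
        obtain ⟨hpos, hneg⟩ := hsat
        by_cases hhi : (r.head ∩ strTail lv (n + 1)).Nonempty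
        · obtain ⟨h, hh, hht⟩ := hhi
          exact ⟨h, hh, Or.inr hht⟩
        have hhead_le : ∀ h ∈ r.head, lv h ≤ n := by
          intro h hh
          by_contra hcon
          exact hhi ⟨h, hh, show n + 1 ≤ lv h by omega⟩
        obtain ⟨h₀, hh₀⟩ := r.head_ne
        have hh₀le : lv h₀ ≤ n := hhead_le h₀ hh₀
        have hnegM : r.neg ∩ Mfin H lv = ∅ := by
          rw [Set.eq_empty_iff_forall_notMem]
          rintro b ⟨hbneg, hbM⟩
          have hblt : lv b < n := by
            have := (hs r hr h₀ hh₀).2 b hbneg; omega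
          have : b ∈ cum H lv n := mem_Mfin_of_lt hbM hblt
          exact (Set.eq_empty_iff_forall_notMem.1 hneg b) ⟨hbneg, Or.inl (Or.inl this)⟩
        have hposN : r.pos ⊆ N := by
          intro p hp
          rcases hpos hp with (h | h) | h
          · exact ih h
          · exact h.1
          · exfalso
            have h1 : n + 1 ≤ lv p := h
            have := (hs r hr h₀ hh₀).1 p hp
            omega
        have hsatN := hNmod _ (reduce_mem_reduct hr hnegM)
        rw [satisfiedBy_reduce_iff] at hsatN
        obtain ⟨h₁, hh₁, hh₁N⟩ := hsatN hposN
        have hh₁le := hhead_le h₁ hh₁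
        have hh₁cum : h₁ ∈ cum H lv (n + 1) := mem_Mfin_of_lt (hNsub hh₁N) (by omega)
        rcases hh₁cum with h' | h'
        · exact ⟨h₁, hh₁, Or.inl (Or.inl h')⟩
        · exact ⟨h₁, hh₁, Or.inl (Or.inr ⟨hh₁N, h'⟩)⟩
      have heq := hspec.2 _ hX' Set.inter_subset_right
      rw [cum_succ]
      rintro a (ha | ha)
      · exact ih ha
      · rw [← heq] at ha
        exact ha.1
  refine le_antisymm hNsub ?_
  intro a ha
  obtain ⟨_, ⟨m, rfl⟩, ha⟩ := ha
  exact hcum m ha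

/-- Every stratified program has a stable model. -/
theorem exists_stable_of_stratified {H : Set (GroundRule A)} (h : isStratified H) :
    ∃ M, isStableModel H M := by
  obtain ⟨lv, hs⟩ := h
  exact ⟨Mfin H lv, Mfin_model hs, fun N hN hmod => Mfin_minimal hs hN hmod⟩

end Strat

end MagicAux
namespace MagicAux

section Split

variable {A : Type}

/-- The bottom (relevant) part of a program w.r.t. a closed set `U`. -/
def bot (G : Set (GroundRule A)) (U : Set A) : Set (GroundRule A) :=
  {r ∈ G | (r.head ∩ U).Nonempty}

/-- `U` is closed w.r.t. `G`. -/
def ClosedFor (G : Set (GroundRule A)) (U : Set A) : Prop :=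
  ∀ r ∈ G, (r.head ∩ U).Nonempty → r.head ∪ r.pos ∪ r.neg ⊆ U

theorem ClosedFor.head_sub {G : Set (GroundRule A)} {U : Set A} (h : ClosedFor G U)
    {r : GroundRule A} (hr : r ∈ G) (hne : (r.head ∩ U).Nonempty) : r.head ⊆ U :=
  fun a ha => h r hr hne (Or.inl (Or.inl ha))

theorem ClosedFor.pos_sub {G : Set (GroundRule A)} {U : Set A} (h : ClosedFor G U)
    {r : GroundRule A} (hr : r ∈ G) (hne : (r.head ∩ U).Nonempty) : r.pos ⊆ U :=
  fun a ha => h r hr hne (Or.inl (Or.inr ha))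

theorem ClosedFor.neg_sub {G : Set (GroundRule A)} {U : Set A} (h : ClosedFor G U)
    {r : GroundRule A} (hr : r ∈ G) (hne : (r.head ∩ U).Nonempty) : r.neg ⊆ U :=
  fun a ha => h r hr hne (Or.inr ha)

/-- A stable model of the bottom program is contained in `U`. -/
theorem bot_stable_subset {G : Set (GroundRule A)} {U M : Set A} (hcl : ClosedFor G U)
    (hM : isStableModel (bot G U) M) : M ⊆ U :=
  stable_subset_of_heads (fun r hr => hcl.head_sub hr.1 hr.2) hM

/-- Restriction: if `M` is stable for `G` then `M ∩ U` is stable for the bottom. -/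
theorem restrict_stable {G : Set (GroundRule A)} {U M : Set A} (hcl : ClosedFor G U)
    (hM : isStableModel G M) : isStableModel (bot G U) (M ∩ U) := by
  constructor
  · rintro g ⟨r, ⟨hrG, hrne⟩, hneg, rfl⟩
    rw [satisfiedBy_reduce_iff]
    intro hpos
    have hnegM : r.neg ∩ M = ∅ := by
      rw [Set.eq_empty_iff_forall_notMem]
      rintro b ⟨hbneg, hbM⟩
      exact (Set.eq_empty_iff_forall_notMem.1 hneg b)
        ⟨hbneg, hbM, hcl.neg_sub hrG hrne hbneg⟩
    have := hM.1 _ (reduce_mem_reduct hrG hnegM)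
    rw [satisfiedBy_reduce_iff] at this
    obtain ⟨h, hh, hhM⟩ := this (hpos.trans Set.inter_subset_left)
    exact ⟨h, hh, hhM, hcl.head_sub hrG hrne hh⟩
  · intro N hN hNmod
    have hN' : N ∪ (M \ U) ⊆ M :=
      Set.union_subset (hN.trans Set.inter_subset_left) Set.diff_subset
    have hmod : isModel (N ∪ (M \ U)) (reduct G M) := by
      rintro g ⟨r, hrG, hneg, rfl⟩
      rw [satisfiedBy_reduce_iff]
      intro hpos
      by_cases hrne : (r.head ∩ U).Nonempty
      · have hposN : r.pos ⊆ N := by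
          intro p hp
          rcases hpos hp with h | h
          · exact h
          · exact absurd (hcl.pos_sub hrG hrne hp) h.2
        have hnegMU : r.neg ∩ (M ∩ U) = ∅ := by
          rw [Set.eq_empty_iff_forall_notMem]
          rintro b ⟨hbneg, hbMU⟩
          exact (Set.eq_empty_iff_forall_notMem.1 hneg b) ⟨hbneg, hbMU.1⟩
        have := hNmod _ (reduce_mem_reduct (⟨hrG, hrne⟩ : r ∈ bot G U) hnegMU)
        rw [satisfiedBy_reduce_iff] at this
        obtain ⟨h, hh, hhN⟩ := this hposN
        exact ⟨h, hh, Or.inl hhN⟩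
      · have := hM.1 _ (reduce_mem_reduct hrG hneg)
        rw [satisfiedBy_reduce_iff] at this
        obtain ⟨h, hh, hhM⟩ := this (hpos.trans hN')
        refine ⟨h, hh, Or.inr ⟨hhM, fun hU => hrne ⟨h, hh, hU⟩⟩⟩
    have heq := hM.2 _ hN' hmod
    refine le_antisymm hN ?_
    rintro a ⟨haM, haU⟩
    rw [← heq] at haM
    rcases haM with h | h
    · exact h
    · exact absurd haU h.2

/-- The evaluated top program. -/
def topProg (G : Set (GroundRule A)) (U Mb : Set A) : Set (GroundRule A) :=
  {g | ∃ r ∈ G, ¬(r.head ∩ U).Nonempty ∧ r.pos ∩ U ⊆ Mb ∧ r.neg ∩ U ∩ Mb = ∅ ∧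
    g = ⟨r.head, r.pos \ U, r.neg \ U, r.head_fin, r.pos_fin.diff (t := U), r.neg_fin.diff (t := U),
      r.head_ne⟩}

theorem topProg_stratified {G : Set (GroundRule A)} {U Mb : Set A}
    (h : isStratified G) : isStratified (topProg G U Mb) := by
  obtain ⟨lv, hlv⟩ := h
  refine ⟨lv, ?_⟩
  rintro g ⟨r, hrG, _, _, _, rfl⟩ h hh
  exact ⟨fun b hb => (hlv r hrG h hh).1 b hb.1, fun b hb => (hlv r hrG h hh).2 b hb.1⟩

/-- Extension: a stable model of the bottom extends to a stable model of `G`. -/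
theorem extend_stable {G : Set (GroundRule A)} {U Mb : Set A} (hcl : ClosedFor G U)
    (hstrat : isStratified G) (hMb : isStableModel (bot G U) Mb) :
    ∃ M, isStableModel G M ∧ M ∩ U = Mb := by
  have hMbU : Mb ⊆ U := bot_stable_subset hcl hMb
  obtain ⟨Mt, hMt⟩ := exists_stable_of_stratified (topProg_stratified (U := U) (Mb := Mb) hstrat)
  have hMtU : Mt ∩ U = ∅ := by
    have : Mt ⊆ Uᶜ := by
      refine stable_subset_of_heads ?_ hMt
      rintro g ⟨r, _, hrne, _, _, rfl⟩ a ha hU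
      exact hrne ⟨a, ha, hU⟩
    rw [Set.eq_empty_iff_forall_notMem]
    rintro a ⟨h1, h2⟩
    exact this h1 h2
  set M := Mb ∪ Mt with hMdef
  have hMU : M ∩ U = Mb := by
    rw [hMdef, Set.union_inter_distrib_right, hMtU, Set.union_empty,
      Set.inter_eq_left.2 hMbU]
  have hMcap : M ∩ Uᶜ = Mt := by
    rw [hMdef, Set.union_inter_distrib_right]
    have h1 : Mb ∩ Uᶜ = ∅ := by
      rw [Set.eq_empty_iff_forall_notMem]; rintro a ⟨h1, h2⟩; exact h2 (hMbU h1)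
    have h2 : Mt ∩ Uᶜ = Mt := by
      rw [Set.inter_eq_left]
      intro a ha hU
      exact (Set.eq_empty_iff_forall_notMem.1 hMtU a) ⟨ha, hU⟩
    rw [h1, h2, Set.empty_union]
  refine ⟨M, ⟨?_, ?_⟩, hMU⟩
  · -- M is a model of the reduct
    rintro g ⟨r, hrG, hneg, rfl⟩
    rw [satisfiedBy_reduce_iff]
    intro hpos
    by_cases hrne : (r.head ∩ U).Nonempty
    · have hposMb : r.pos ⊆ Mb := by
        intro p hp
        have : p ∈ M ∩ U := ⟨hpos hp, hcl.pos_sub hrG hrne hp⟩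
        rw [hMU] at this; exact this
      have hnegMb : r.neg ∩ Mb = ∅ := by
        rw [Set.eq_empty_iff_forall_notMem]
        rintro b ⟨hb, hbMb⟩
        exact (Set.eq_empty_iff_forall_notMem.1 hneg b) ⟨hb, Or.inl hbMb⟩
      have := hMb.1 _ (reduce_mem_reduct (⟨hrG, hrne⟩ : r ∈ bot G U) hnegMb)
      rw [satisfiedBy_reduce_iff] at this
      obtain ⟨h, hh, hhMb⟩ := this hposMb
      exact ⟨h, hh, Or.inl hhMb⟩
    · -- the residual rule is in the top program
      have hposU : r.pos ∩ U ⊆ Mb := by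
        rintro p ⟨hp, hpU⟩
        have : p ∈ M ∩ U := ⟨hpos hp, hpU⟩
        rw [hMU] at this; exact this
      have hnegU : r.neg ∩ U ∩ Mb = ∅ := by
        rw [Set.eq_empty_iff_forall_notMem]
        rintro b ⟨⟨hb, _⟩, hbMb⟩
        exact (Set.eq_empty_iff_forall_notMem.1 hneg b) ⟨hb, Or.inl hbMb⟩
      have hgtop : (⟨r.head, r.pos \ U, r.neg \ U, r.head_fin, r.pos_fin.diff (t := U),
          r.neg_fin.diff (t := U), r.head_ne⟩ : GroundRule A) ∈ topProg G U Mb :=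
        ⟨r, hrG, hrne, hposU, hnegU, rfl⟩
      have hnegMt : (r.neg \ U) ∩ Mt = ∅ := by
        rw [Set.eq_empty_iff_forall_notMem]
        rintro b ⟨⟨hb, _⟩, hbMt⟩
        exact (Set.eq_empty_iff_forall_notMem.1 hneg b) ⟨hb, Or.inr hbMt⟩
      have := hMt.1 _ (reduce_mem_reduct hgtop hnegMt)
      rw [satisfiedBy_reduce_iff] at this
      have hposMt : r.pos \ U ⊆ Mt := by
        rintro p ⟨hp, hpU⟩
        have : p ∈ M ∩ Uᶜ := ⟨hpos hp, hpU⟩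
        rw [hMcap] at this; exact this
      obtain ⟨h, hh, hhMt⟩ := this hposMt
      exact ⟨h, hh, Or.inr hhMt⟩
  · -- minimality
    intro N hN hNmod
    have hNU : N ∩ U = Mb := by
      refine hMb.2 _ (by rw [← hMU]; exact Set.inter_subset_inter_left U hN) ?_
      rintro g ⟨r, ⟨hrG, hrne⟩, hneg, rfl⟩
      rw [satisfiedBy_reduce_iff]
      intro hpos
      have hnegM : r.neg ∩ M = ∅ := by
        rw [Set.eq_empty_iff_forall_notMem]
        rintro b ⟨hb, hbM⟩
        have : b ∈ M ∩ U := ⟨hbM, hcl.neg_sub hrG hrne hb⟩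
        rw [hMU] at this
        exact (Set.eq_empty_iff_forall_notMem.1 hneg b) ⟨hb, this⟩
      have := hNmod _ (reduce_mem_reduct hrG hnegM)
      rw [satisfiedBy_reduce_iff] at this
      obtain ⟨h, hh, hhN⟩ := this (hpos.trans Set.inter_subset_left)
      exact ⟨h, hh, hhN, hcl.head_sub hrG hrne hh⟩
    have hNt : N ∩ Uᶜ = Mt := by
      refine hMt.2 _ (by rw [← hMcap]; exact Set.inter_subset_inter_left Uᶜ hN) ?_
      rintro g ⟨g', ⟨r, hrG, hrne, hposU, hnegU, rfl⟩, hgneg, rfl⟩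
      rw [satisfiedBy_reduce_iff]
      intro hpos
      have hnegM : r.neg ∩ M = ∅ := by
        rw [Set.eq_empty_iff_forall_notMem]
        rintro b ⟨hb, hbM⟩
        by_cases hbU : b ∈ U
        · have : b ∈ M ∩ U := ⟨hbM, hbU⟩
          rw [hMU] at this
          exact (Set.eq_empty_iff_forall_notMem.1 hnegU b) ⟨⟨hb, hbU⟩, this⟩
        · have : b ∈ M ∩ Uᶜ := ⟨hbM, hbU⟩
          rw [hMcap] at this
          exact (Set.eq_empty_iff_forall_notMem.1 hgneg b) ⟨⟨hb, hbU⟩, this⟩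
      have := hNmod _ (reduce_mem_reduct hrG hnegM)
      rw [satisfiedBy_reduce_iff] at this
      have hposN : r.pos ⊆ N := by
        intro p hp
        by_cases hpU : p ∈ U
        · have : p ∈ N ∩ U := by rw [hNU]; exact hposU ⟨hp, hpU⟩
          exact this.1
        · exact (hpos ⟨hp, hpU⟩).1
      obtain ⟨h, hh, hhN⟩ := this hposN
      exact ⟨h, hh, hhN, fun hU => hrne ⟨h, hh, hU⟩⟩
    refine le_antisymm hN ?_
    rintro a (h | h)
    · rw [← hNU] at h; exact h.1
    · rw [← hNt] at h; exact h.1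

end Split

end MagicAux
namespace MagicAux

section Transfer

variable {A : Type}

theorem mem_relevantFor {G : Set (GroundRule A)} {Q : A} : Q ∈ relevantFor G Q :=
  Set.mem_sInter.2 fun _ hR => hR.1

theorem relevantFor_closed {G : Set (GroundRule A)} {Q : A} :
    ClosedFor G (relevantFor G Q) := by
  intro r hr hne a ha
  refine Set.mem_sInter.2 fun R hR => ?_
  obtain ⟨h, hh, hhU⟩ := hne
  exact hR.2 r hr ⟨h, hh, Set.mem_sInter.1 hhU R hR⟩ ha

theorem stratified_subset {G P : Set (GroundRule A)} (hPG : P ⊆ G)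
    (h : isStratified G) : isStratified P := by
  obtain ⟨lv, hlv⟩ := h
  exact ⟨lv, fun r hr => hlv r (hPG hr)⟩

theorem bot_eq {G P : Set (GroundRule A)} {U : Set A} (hPG : P ⊆ G)
    (hGU : ∀ r ∈ G, (r.head ∩ U).Nonempty → r ∈ P) : bot P U = bot G U := by
  ext r
  exact ⟨fun h => ⟨hPG h.1, h.2⟩, fun h => ⟨hGU r h.1 h.2, h.2⟩⟩

/-- Any stable model of `G` has a companion stable model of `P` with the same
trace on `U`, provided `P` sits between the `U`-relevant part of `G` and `G`. -/
theorem stable_transfer {G P : Set (GroundRule A)} {U : Set A}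
    (hPG : P ⊆ G) (hGU : ∀ r ∈ G, (r.head ∩ U).Nonempty → r ∈ P)
    (hcl : ClosedFor G U) (hstrat : isStratified G) {M : Set A}
    (hM : isStableModel G M) : ∃ M', isStableModel P M' ∧ M' ∩ U = M ∩ U := by
  have hbot : isStableModel (bot P U) (M ∩ U) := by
    rw [bot_eq hPG hGU]
    exact restrict_stable hcl hM
  have hclP : ClosedFor P U := fun r hr => hcl r (hPG hr)
  obtain ⟨M', hM', hM'U⟩ := extend_stable hclP (stratified_subset hPG hstrat) hbot
  exact ⟨M', hM', hM'U⟩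

/-- The converse companion construction. -/
theorem stable_transfer' {G P : Set (GroundRule A)} {U : Set A}
    (hPG : P ⊆ G) (hGU : ∀ r ∈ G, (r.head ∩ U).Nonempty → r ∈ P)
    (hcl : ClosedFor G U) (hstrat : isStratified G) {M' : Set A}
    (hM' : isStableModel P M') : ∃ M, isStableModel G M ∧ M ∩ U = M' ∩ U := by
  have hclP : ClosedFor P U := fun r hr => hcl r (hPG hr)
  have hbot : isStableModel (bot G U) (M' ∩ U) := by
    rw [← bot_eq hPG hGU]
    exact restrict_stable hclP hM'
  obtain ⟨M, hM, hMU⟩ := extend_stable hcl hstrat hbot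
  exact ⟨M, hM, hMU⟩

end Transfer

end MagicAux
namespace MagicAux

section Magic

variable {A : Type} {idb edb : Set (GroundRule A)} {Q : A}

/-- The program on the original atoms to which the magic program corresponds:
the magic-relevant IDB rules together with the EDB facts. -/
def magicCore (idb edb : Set (GroundRule A)) (Q : A) : Set (GroundRule A) :=
  {r ∈ idb | ∀ p ∈ r.head, Sum.inr p ∈ Mstar idb Q} ∪ edb

theorem magicSub_neg {r : GroundRule (A ⊕ A)} (hr : r ∈ magicSub idb Q) : r.neg = ∅ := by
  rcases hr with hr | ⟨_, _, _, _, _, _, _, rfl⟩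
  · rw [hr]; rfl
  · rfl

theorem leastModel_model {G : Set (GroundRule A)}
    (hG : ∀ r ∈ G, (∃ a, r.head = {a}) ∧ r.neg = ∅) : isModel (leastModel G) G := by
  intro r hr hsat
  obtain ⟨⟨a, ha⟩, hneg⟩ := hG r hr
  have haL : a ∈ leastModel G := by
    refine Set.mem_sInter.2 fun I hI => ?_
    have hnegI : r.neg ∩ I = ∅ := by rw [hneg]; exact Set.empty_inter I
    have := hI r hr ⟨hsat.1.trans (Set.sInter_subset_of_mem hI), hnegI⟩
    obtain ⟨x, hx, hxI⟩ := this
    rw [ha] at hx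
    rwa [← hx]
  refine ⟨a, ?_, haL⟩
  rw [ha]
  exact rfl

theorem magicSub_shape : ∀ r ∈ magicSub idb Q, (∃ a, r.head = {a}) ∧ r.neg = ∅ := by
  rintro r (hr | ⟨_, _, _, _, q, _, _, rfl⟩)
  · rw [hr]; exact ⟨⟨Sum.inr Q, rfl⟩, rfl⟩
  · exact ⟨⟨Sum.inr q, rfl⟩, rfl⟩

theorem Mstar_model : isModel (Mstar idb Q) (magicSub idb Q) :=
  leastModel_model magicSub_shape

theorem Mstar_least {I : Set (A ⊕ A)} (hI : isModel I (magicSub idb Q)) :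
    Mstar idb Q ⊆ I := Set.sInter_subset_of_mem hI

theorem Mstar_inr : Mstar idb Q ⊆ Set.range Sum.inr := by
  refine Mstar_least ?_
  rintro r (hr | ⟨_, _, _, _, q, _, _, rfl⟩) _
  · exact ⟨Sum.inr Q, by rw [hr]; exact rfl, ⟨Q, rfl⟩⟩
  · exact ⟨Sum.inr q, rfl, ⟨q, rfl⟩⟩

theorem inl_not_mem_Mstar (a : A) : Sum.inl a ∉ Mstar idb Q := by
  intro h
  obtain ⟨b, hb⟩ := Mstar_inr h
  exact Sum.inl_ne_inr hb.symm

theorem seed_mem_Mstar : Sum.inr Q ∈ Mstar idb Q := by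
  have := Mstar_model (idb := idb) (Q := Q) _ (Or.inl rfl)
    ⟨Set.empty_subset _, Set.empty_inter _⟩
  obtain ⟨x, hx, hxM⟩ := this
  rw [Set.eq_of_mem_singleton hx] at hxM
  exact hxM

theorem magic_closure {r : GroundRule A} (hr : r ∈ idb) {p : A} (hp : p ∈ r.head)
    (hpM : Sum.inr p ∈ Mstar idb Q) {q : A} (hq : q ∈ r.head ∪ r.pos ∪ r.neg) (hqp : q ≠ p)
    (hqidb : isIDBAtom idb q) : Sum.inr q ∈ Mstar idb Q := by
  have hmem : magicRule q p ∈ magicSub idb Q :=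
    Or.inr ⟨r, hr, p, hp, q, ⟨hq, hqp⟩, hqidb, rfl⟩
  have := Mstar_model _ hmem ⟨Set.singleton_subset_iff.2 hpM, Set.empty_inter _⟩
  obtain ⟨x, hx, hxM⟩ := this
  rw [Set.eq_of_mem_singleton hx] at hxM
  exact hxM

theorem head_closure {r : GroundRule A} (hr : r ∈ idb) {p : A} (hp : p ∈ r.head)
    (hpM : Sum.inr p ∈ Mstar idb Q) : ∀ q ∈ r.head, Sum.inr q ∈ Mstar idb Q := by
  intro q hq
  rcases eq_or_ne q p with rfl | hqp
  · exact hpM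
  · exact magic_closure hr hp hpM (Or.inl (Or.inl hq)) hqp ⟨r, hr, hq⟩

theorem magicSub_sub : magicSub idb Q ⊆ magicProg idb edb Q := fun _ h => Or.inl (Or.inl h)

theorem modified_mem {r : GroundRule A} (hr : r ∈ idb) :
    modifiedRule r ∈ magicProg idb edb Q := Or.inl (Or.inr ⟨r, hr, rfl⟩)

theorem mapped_mem {e : GroundRule A} (he : e ∈ edb) :
    e.map Sum.inl ∈ magicProg idb edb Q := Or.inr ⟨e, he, rfl⟩

theorem mem_lift_inl {M : Set A} {a : A} :
    Sum.inl a ∈ Sum.inl '' M ∪ Mstar idb Q ↔ a ∈ M := by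
  constructor
  · rintro (⟨b, hb, hba⟩ | h)
    · rwa [← Sum.inl_injective hba]
    · exact absurd h (inl_not_mem_Mstar a)
  · exact fun h => Or.inl ⟨a, h, rfl⟩

theorem mem_lift_inr {M : Set A} {a : A} :
    Sum.inr a ∈ Sum.inl '' M ∪ Mstar idb Q ↔ Sum.inr a ∈ Mstar idb Q := by
  constructor
  · rintro (⟨b, _, hba⟩ | h)
    · exact absurd hba (Sum.inl_ne_inr)
    · exact h
  · exact fun h => Or.inr h

/-- Every model of the reduct of the magic program w.r.t. anything
is a model of the magic subprogram (whose rules are negation-free). -/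
theorem model_magicSub_of_reduct {N I : Set (A ⊕ A)}
    (hmod : isModel I (reduct (magicProg idb edb Q) N)) : isModel I (magicSub idb Q) := by
  intro r hr hsat
  have hneg : r.neg ∩ N = ∅ := by rw [magicSub_neg hr]; exact Set.empty_inter N
  have := hmod _ (reduce_mem_reduct (magicSub_sub hr) hneg)
  rw [satisfiedBy_reduce_iff] at this
  exact this hsat.1

end Magic

end MagicAux
namespace MagicAux

section MagicCorr

variable {A : Type} {idb edb : Set (GroundRule A)} {Q : A}

theorem inl_image_inter_eq {X M : Set A} :
    Sum.inl '' X ∩ (Sum.inl '' M ∪ Mstar idb Q) = ∅ ↔ X ∩ M = ∅ := by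
  constructor
  · intro h
    rw [Set.eq_empty_iff_forall_notMem]
    rintro b ⟨hb, hbM⟩
    exact (Set.eq_empty_iff_forall_notMem.1 h (Sum.inl b))
      ⟨⟨b, hb, rfl⟩, mem_lift_inl.2 hbM⟩
  · intro h
    rw [Set.eq_empty_iff_forall_notMem]
    rintro x ⟨⟨b, hb, rfl⟩, hbN⟩
    exact (Set.eq_empty_iff_forall_notMem.1 h b) ⟨hb, mem_lift_inl.1 hbN⟩

/-- From a stable model of the core program to a stable model of the magic program. -/
theorem magic_stable_of_core (hedb : ∀ r ∈ edb, r.isFact) {M : Set A}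
    (hM : isStableModel (magicCore idb edb Q) M) :
    isStableModel (magicProg idb edb Q) (Sum.inl '' M ∪ Mstar idb Q) := by
  set N := Sum.inl '' M ∪ Mstar idb Q with hNdef
  constructor
  · -- model of the reduct
    rintro g ⟨r, hrS, hneg, rfl⟩
    rw [satisfiedBy_reduce_iff]
    intro hpos
    rcases hrS with (hsub | ⟨r₀, hr₀, rfl⟩) | ⟨e, he, rfl⟩
    · rcases hsub with hseed | ⟨r₀, hr₀, p, hp, q, ⟨hq, hqp⟩, hqidb, rfl⟩
      · rw [hseed]
        exact ⟨Sum.inr Q, rfl, Or.inr seed_mem_Mstar⟩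
      · have hpN : Sum.inr p ∈ Mstar idb Q :=
          mem_lift_inr.1 (hpos (Set.mem_singleton _))
        exact ⟨Sum.inr q, rfl,
          Or.inr (magic_closure hr₀ hp hpN hq (fun h => hqp (Set.mem_singleton_iff.2 h)) hqidb)⟩
    · -- modified rule
      have hposM : r₀.pos ⊆ M := fun p hp => mem_lift_inl.1 (hpos (Or.inl ⟨p, hp, rfl⟩))
      have hheadM : ∀ p ∈ r₀.head, Sum.inr p ∈ Mstar idb Q :=
        fun p hp => mem_lift_inr.1 (hpos (Or.inr ⟨p, hp, rfl⟩))
      have hnegM : r₀.neg ∩ M = ∅ := inl_image_inter_eq.1 hneg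
      have hcore : r₀ ∈ magicCore idb edb Q := Or.inl ⟨hr₀, hheadM⟩
      have := hM.1 _ (reduce_mem_reduct hcore hnegM)
      rw [satisfiedBy_reduce_iff] at this
      obtain ⟨h, hh, hhM⟩ := this hposM
      exact ⟨Sum.inl h, ⟨h, hh, rfl⟩, Or.inl ⟨h, hhM, rfl⟩⟩
    · -- mapped EDB fact
      obtain ⟨_, hposE, hnegE⟩ := hedb e he
      have hcore : e ∈ magicCore idb edb Q := Or.inr he
      have hnegM : e.neg ∩ M = ∅ := by rw [hnegE]; exact Set.empty_inter M
      have := hM.1 _ (reduce_mem_reduct hcore hnegM)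
      rw [satisfiedBy_reduce_iff] at this
      have hposM : e.pos ⊆ M := by rw [hposE]; exact Set.empty_subset M
      obtain ⟨h, hh, hhM⟩ := this hposM
      exact ⟨Sum.inl h, ⟨h, hh, rfl⟩, Or.inl ⟨h, hhM, rfl⟩⟩
  · -- minimality
    intro N' hN' hN'mod
    have hMsN' : Mstar idb Q ⊆ N' := Mstar_least (model_magicSub_of_reduct hN'mod)
    set M'' := {a | Sum.inl a ∈ N'} with hM''def
    have hM''M : M'' ⊆ M := fun a ha => mem_lift_inl.1 (hN' ha)
    have hM''mod : isModel M'' (reduct (magicCore idb edb Q) M) := by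
      rintro g ⟨r, hrC, hnegM, rfl⟩
      rw [satisfiedBy_reduce_iff]
      intro hpos
      rcases hrC with ⟨hr₀, hall⟩ | he
      · have hnegN : (modifiedRule r).neg ∩ N = ∅ := inl_image_inter_eq.2 hnegM
        have := hN'mod _ (reduce_mem_reduct (modified_mem hr₀) hnegN)
        rw [satisfiedBy_reduce_iff] at this
        have hposN' : (modifiedRule r).pos ⊆ N' := by
          rintro x (⟨p, hp, rfl⟩ | ⟨p, hp, rfl⟩)
          · exact hpos hp
          · exact hMsN' (hall p hp)
        obtain ⟨x, ⟨h, hh, rfl⟩, hxN'⟩ := this hposN'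
        exact ⟨h, hh, hxN'⟩
      · obtain ⟨_, hposE, hnegE⟩ := hedb _ he
        have hnegN : (GroundRule.map Sum.inl r).neg ∩ N = ∅ := by
          show Sum.inl '' r.neg ∩ N = ∅
          rw [hnegE, Set.image_empty]
          exact Set.empty_inter N
        have := hN'mod _ (reduce_mem_reduct (mapped_mem he) hnegN)
        rw [satisfiedBy_reduce_iff] at this
        have hposN' : (GroundRule.map Sum.inl r).pos ⊆ N' := by
          show Sum.inl '' r.pos ⊆ N'
          rw [hposE, Set.image_empty]
          exact Set.empty_subset N'
        obtain ⟨x, ⟨h, hh, rfl⟩, hxN'⟩ := this hposN'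
        exact ⟨h, hh, hxN'⟩
    have hM''eq : M'' = M := hM.2 _ hM''M hM''mod
    refine le_antisymm hN' ?_
    rintro x (⟨a, ha, rfl⟩ | hx)
    · rw [← hM''eq] at ha
      exact ha
    · exact hMsN' hx

/-- From a stable model of the magic program to a stable model of the core program. -/
theorem core_stable_of_magic (hedb : ∀ r ∈ edb, r.isFact) {N : Set (A ⊕ A)}
    (hN : isStableModel (magicProg idb edb Q) N) :
    isStableModel (magicCore idb edb Q) {a | Sum.inl a ∈ N} ∧
      N = Sum.inl '' {a | Sum.inl a ∈ N} ∪ Mstar idb Q := by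
  set M := {a | Sum.inl a ∈ N} with hMdef
  have hMsN : Mstar idb Q ⊆ N := Mstar_least (model_magicSub_of_reduct hN.1)
  have hNeq : N = Sum.inl '' M ∪ Mstar idb Q := by
    have hsub : Sum.inl '' M ∪ Mstar idb Q ⊆ N := by
      rintro x (⟨a, ha, rfl⟩ | hx)
      · exact ha
      · exact hMsN hx
    have hmod : isModel (Sum.inl '' M ∪ Mstar idb Q) (reduct (magicProg idb edb Q) N) := by
      rintro g ⟨r, hrS, hneg, rfl⟩
      rw [satisfiedBy_reduce_iff]
      intro hpos
      rcases hrS with (hsubm | ⟨r₀, hr₀, rfl⟩) | ⟨e, he, rfl⟩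
      · rcases hsubm with hseed | ⟨r₀, hr₀, p, hp, q, ⟨hq, hqp⟩, hqidb, rfl⟩
        · rw [hseed]
          exact ⟨Sum.inr Q, rfl, Or.inr seed_mem_Mstar⟩
        · have hpN : Sum.inr p ∈ Mstar idb Q :=
            mem_lift_inr.1 (hpos (Set.mem_singleton _))
          exact ⟨Sum.inr q, rfl,
            Or.inr (magic_closure hr₀ hp hpN hq
              (fun h => hqp (Set.mem_singleton_iff.2 h)) hqidb)⟩
      · have := hN.1 _ (reduce_mem_reduct (modified_mem hr₀) hneg)
        rw [satisfiedBy_reduce_iff] at this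
        obtain ⟨x, ⟨h, hh, rfl⟩, hxN⟩ := this (hpos.trans hsub)
        exact ⟨Sum.inl h, ⟨h, hh, rfl⟩, Or.inl ⟨h, hxN, rfl⟩⟩
      · have := hN.1 _ (reduce_mem_reduct (mapped_mem he) hneg)
        rw [satisfiedBy_reduce_iff] at this
        obtain ⟨x, ⟨h, hh, rfl⟩, hxN⟩ := this (hpos.trans hsub)
        exact ⟨Sum.inl h, ⟨h, hh, rfl⟩, Or.inl ⟨h, hxN, rfl⟩⟩
    exact (hN.2 _ hsub hmod).symm
  refine ⟨⟨?_, ?_⟩, hNeq⟩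
  · -- M is a model of the reduct of the core program
    rintro g ⟨r, hrC, hnegM, rfl⟩
    rw [satisfiedBy_reduce_iff]
    intro hpos
    rcases hrC with ⟨hr₀, hall⟩ | he
    · have hnegN : (modifiedRule r).neg ∩ N = ∅ := by
        rw [hNeq]; exact inl_image_inter_eq.2 hnegM
      have := hN.1 _ (reduce_mem_reduct (modified_mem hr₀) hnegN)
      rw [satisfiedBy_reduce_iff] at this
      have hposN : (modifiedRule r).pos ⊆ N := by
        rintro x (⟨p, hp, rfl⟩ | ⟨p, hp, rfl⟩)
        · exact hpos hp
        · exact hMsN (hall p hp)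
      obtain ⟨x, ⟨h, hh, rfl⟩, hxN⟩ := this hposN
      exact ⟨h, hh, hxN⟩
    · obtain ⟨_, hposE, hnegE⟩ := hedb _ he
      have hnegN : (GroundRule.map Sum.inl r).neg ∩ N = ∅ := by
        show Sum.inl '' r.neg ∩ N = ∅
        rw [hnegE, Set.image_empty]
        exact Set.empty_inter N
      have := hN.1 _ (reduce_mem_reduct (mapped_mem he) hnegN)
      rw [satisfiedBy_reduce_iff] at this
      have hposN : (GroundRule.map Sum.inl r).pos ⊆ N := by
        show Sum.inl '' r.pos ⊆ N
        rw [hposE, Set.image_empty]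
        exact Set.empty_subset N
      obtain ⟨x, ⟨h, hh, rfl⟩, hxN⟩ := this hposN
      exact ⟨h, hh, hxN⟩
  · -- minimality of M
    intro M₁ hM₁ hM₁mod
    set N₁ := Sum.inl '' M₁ ∪ Mstar idb Q with hN₁def
    have hN₁N : N₁ ⊆ N := by
      rintro x (⟨a, ha, rfl⟩ | hx)
      · exact hM₁ ha
      · exact hMsN hx
    have hN₁mod : isModel N₁ (reduct (magicProg idb edb Q) N) := by
      rintro g ⟨r, hrS, hneg, rfl⟩
      rw [satisfiedBy_reduce_iff]
      intro hpos
      rcases hrS with (hsubm | ⟨r₀, hr₀, rfl⟩) | ⟨e, he, rfl⟩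
      · rcases hsubm with hseed | ⟨r₀, hr₀, p, hp, q, ⟨hq, hqp⟩, hqidb, rfl⟩
        · rw [hseed]
          exact ⟨Sum.inr Q, rfl, Or.inr seed_mem_Mstar⟩
        · have hpN : Sum.inr p ∈ Mstar idb Q :=
            mem_lift_inr.1 (hpos (Set.mem_singleton _))
          exact ⟨Sum.inr q, rfl,
            Or.inr (magic_closure hr₀ hp hpN hq
              (fun h => hqp (Set.mem_singleton_iff.2 h)) hqidb)⟩
      · -- modified rule
        have hposM₁ : r₀.pos ⊆ M₁ := fun p hp => mem_lift_inl.1 (hpos (Or.inl ⟨p, hp, rfl⟩))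
        have hall : ∀ p ∈ r₀.head, Sum.inr p ∈ Mstar idb Q :=
          fun p hp => mem_lift_inr.1 (hpos (Or.inr ⟨p, hp, rfl⟩))
        have hnegM : r₀.neg ∩ M = ∅ := by
          rw [hNeq] at hneg
          exact inl_image_inter_eq.1 hneg
        have hcore : r₀ ∈ magicCore idb edb Q := Or.inl ⟨hr₀, hall⟩
        have := hM₁mod _ (reduce_mem_reduct hcore hnegM)
        rw [satisfiedBy_reduce_iff] at this
        obtain ⟨h, hh, hhM₁⟩ := this hposM₁
        exact ⟨Sum.inl h, ⟨h, hh, rfl⟩, Or.inl ⟨h, hhM₁, rfl⟩⟩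
      · obtain ⟨_, hposE, hnegE⟩ := hedb _ he
        have hcore : e ∈ magicCore idb edb Q := Or.inr he
        have hnegM : e.neg ∩ M = ∅ := by rw [hnegE]; exact Set.empty_inter M
        have := hM₁mod _ (reduce_mem_reduct hcore hnegM)
        rw [satisfiedBy_reduce_iff] at this
        have hposM₁ : e.pos ⊆ M₁ := by rw [hposE]; exact Set.empty_subset M₁
        obtain ⟨h, hh, hhM₁⟩ := this hposM₁
        exact ⟨Sum.inl h, ⟨h, hh, rfl⟩, Or.inl ⟨h, hhM₁, rfl⟩⟩
    have hN₁eq : N₁ = N := hN.2 _ hN₁N hN₁mod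
    refine le_antisymm hM₁ ?_
    intro a ha
    have : Sum.inl a ∈ N₁ := by rw [hN₁eq]; exact ha
    exact mem_lift_inl.1 this

end MagicCorr

end MagicAux
/-- Query equivalence of the magic set transformation: `G = idb ∪ edb` bravely
(resp. cautiously) entails `Q` iff `Magic(Q,G)` bravely (resp. cautiously)
entails the left copy of `Q`. -/
theorem magic_query_equivalence {A : Type} (idb edb : Set (GroundRule A)) (Q : A)
    (hpart : isPartition idb edb) (hstrat : isStratified (idb ∪ edb))
    (hQ : isIDBAtom idb Q) (hfr : finitelyRecursive (idb ∪ edb) Q) :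
    (braveEnt (idb ∪ edb) Q ↔ braveEnt (magicProg idb edb Q) (Sum.inl Q)) ∧
      (cautiousEnt (idb ∪ edb) Q ↔ cautiousEnt (magicProg idb edb Q) (Sum.inl Q)) := by
  classical
  set G := idb ∪ edb with hGdef
  set U := relevantFor G Q with hUdef
  set P := MagicAux.magicCore idb edb Q with hPdef
  have hedb := hpart.2
  have hPG : P ⊆ G := by
    rintro r (⟨hr, _⟩ | he)
    · exact Or.inl hr
    · exact Or.inr he
  have hcl : MagicAux.ClosedFor G U := MagicAux.relevantFor_closed
  have hQU : Q ∈ U := MagicAux.mem_relevantFor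
  -- the relevant atoms that are IDB atoms have their magic atom in M*
  have hUS : U ⊆ {a | isIDBAtom idb a → Sum.inr a ∈ Mstar idb Q} := by
    apply Set.sInter_subset_of_mem
    constructor
    · exact fun _ => MagicAux.seed_mem_Mstar
    · rintro r hrG ⟨h, hh, hhS⟩ a ha
      rcases hrG with hidb | hedb'
      · have hhT : Sum.inr h ∈ Mstar idb Q := hhS ⟨r, hidb, hh⟩
        intro haidb
        rcases eq_or_ne a h with rfl | hne
        · exact hhT
        · exact MagicAux.magic_closure hidb hh hhT ha hne haidb
      · obtain ⟨⟨b, hb⟩, hposE, hnegE⟩ := hedb r hedb'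
        rcases ha with (ha | ha) | ha
        · rw [hb] at ha hh
          rw [Set.eq_of_mem_singleton ha, ← Set.eq_of_mem_singleton hh]
          exact hhS
        · rw [hposE] at ha; exact absurd ha (Set.notMem_empty a)
        · rw [hnegE] at ha; exact absurd ha (Set.notMem_empty a)
  have hGU : ∀ r ∈ G, (r.head ∩ U).Nonempty → r ∈ P := by
    rintro r hrG ⟨h, hh, hhU⟩
    rcases hrG with hidb | hedb'
    · have hhT : Sum.inr h ∈ Mstar idb Q := hUS hhU ⟨r, hidb, hh⟩
      exact Or.inl ⟨hidb, MagicAux.head_closure hidb hh hhT⟩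
    · exact Or.inr hedb'
  constructor
  · -- brave entailment
    constructor
    · rintro ⟨M, hM, hQM⟩
      obtain ⟨M', hM', htr⟩ := MagicAux.stable_transfer hPG hGU hcl hstrat hM
      have hQM' : Q ∈ M' ∩ U := by rw [htr]; exact ⟨hQM, hQU⟩
      exact ⟨_, MagicAux.magic_stable_of_core hedb hM', Or.inl ⟨Q, hQM'.1, rfl⟩⟩
    · rintro ⟨N, hN, hQN⟩
      obtain ⟨hcoreM, _⟩ := MagicAux.core_stable_of_magic hedb hN
      obtain ⟨M, hM, htr⟩ := MagicAux.stable_transfer' hPG hGU hcl hstrat hcoreM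
      have hQM : Q ∈ M ∩ U := by rw [htr]; exact ⟨hQN, hQU⟩
      exact ⟨M, hM, hQM.1⟩
  · -- cautious entailment
    constructor
    · intro hc N hNstable
      obtain ⟨hcoreM, _⟩ := MagicAux.core_stable_of_magic hedb hNstable
      obtain ⟨M, hM, htr⟩ := MagicAux.stable_transfer' hPG hGU hcl hstrat hcoreM
      have hQM : Q ∈ M ∩ U := ⟨hc M hM, hQU⟩
      rw [htr] at hQM
      exact hQM.1
    · intro hc M hMstable
      obtain ⟨M', hM', htr⟩ := MagicAux.stable_transfer hPG hGU hcl hstrat hMstable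
      have := hc _ (MagicAux.magic_stable_of_core hedb hM')
      have hQM' : Q ∈ M' ∩ U := ⟨MagicAux.mem_lift_inl.1 this, hQU⟩
      rw [htr] at hQM'
      exact hQM'.1
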